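/- Consider the N-player Cournot game in which each firm i chooses a commitment x_i ≥ 0 and receives expected profit π_i(x) = p(x_1 + … + x_N)·x_i − E[(x_i − X_i)^+]. Then a Nash equilibrium exists (a vector x with x_i ≥ 0 for all i such that for every i and every alternative x̃_i ≥ 0, π_i(x̃_i, x_{−i}) ≤ π_i(x_i, x_{−i})). Moreover, every Nash equilibrium x satisfies x_1 + … + x_N ≤ y_max. -/

import Mathlib

open MeasureTheory

/-- Expected profit of firm `i`: price of aggregate commitment times own commitment,
minus the expected shortfall penalty `E[(x_i - X_i)^+]`. -/
noncomputable def cournotPayoff {Ω : Type*} [MeasurableSpace Ω] (P : Measure Ω)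
    (p : ℝ → ℝ) {N : ℕ} (X : Fin N → Ω → ℝ) (i : Fin N) (x : Fin N → ℝ) : ℝ :=
  p (∑ j, x j) * x i - ∫ ω, max (x i - X i ω) 0 ∂P

/-- A nonnegative profile `x` is a Nash equilibrium if no firm can profit by a
unilateral deviation to another nonnegative commitment. -/
def IsCournotNash {Ω : Type*} [MeasurableSpace Ω] (P : Measure Ω)
    (p : ℝ → ℝ) {N : ℕ} (X : Fin N → Ω → ℝ) (x : Fin N → ℝ) : Prop :=
  (∀ i, 0 ≤ x i) ∧
    ∀ i : Fin N, ∀ xd : ℝ, 0 ≤ xd →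
      cournotPayoff P p X i (Function.update x i xd) ≤ cournotPayoff P p X i x

open Set Filter Topology


section Pen
variable {Ω : Type*} [MeasurableSpace Ω] (P : Measure Ω) [IsProbabilityMeasure P]
  (Y : Ω → ℝ)

theorem pen_integrable (hY : Integrable Y P) (x : ℝ) :
    Integrable (fun ω => max (x - Y ω) 0) P := by
  have := ((integrable_const x).sub hY).sup (integrable_const (0:ℝ))
  simpa [Pi.sup_def] using this

theorem pen_mono (hY : Integrable Y P) :
    Monotone (fun x => ∫ ω, max (x - Y ω) 0 ∂P) := by
  intro a b hab
  refine integral_mono (pen_integrable P Y hY a) (pen_integrable P Y hY b) ?_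
  intro ω
  exact max_le_max (by linarith) le_rfl

theorem pen_lip (hY : Integrable Y P) {a b : ℝ} (hab : a ≤ b) :
    (∫ ω, max (b - Y ω) 0 ∂P) ≤ (∫ ω, max (a - Y ω) 0 ∂P) + (b - a) := by
  have h1 : (∫ ω, max (b - Y ω) 0 ∂P) ≤ ∫ ω, (max (a - Y ω) 0 + (b - a)) ∂P := by
    refine integral_mono (pen_integrable P Y hY b)
      ((pen_integrable P Y hY a).add (integrable_const _)) ?_
    intro ω
    have h0 : (0:ℝ) ≤ max (a - Y ω) 0 + (b - a) :=
      add_nonneg (le_max_right _ _) (sub_nonneg.2 hab)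
    have h2 : b - Y ω ≤ max (a - Y ω) 0 + (b - a) := by
      have := le_max_left (a - Y ω) 0; linarith
    exact max_le h2 h0
  rwa [integral_add (pen_integrable P Y hY a) (integrable_const _),
    integral_const, probReal_univ, one_smul] at h1

theorem pen_continuous (hY : Integrable Y P) :
    Continuous (fun x => ∫ ω, max (x - Y ω) 0 ∂P) := by
  have lw : LipschitzWith 1 (fun x => ∫ ω, max (x - Y ω) 0 ∂P) := by
    apply LipschitzWith.of_dist_le_mul
    intro a b
    rw [Real.dist_eq, Real.dist_eq, NNReal.coe_one, one_mul]
    rcases le_total a b with hab | hab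
    · have h1 := pen_lip P Y hY hab
      have h2 := pen_mono P Y hY hab
      simp only at h1 h2 ⊢
      rw [abs_sub_comm, abs_of_nonneg (by linarith), abs_sub_comm, abs_of_nonneg (by linarith)]
      linarith
    · have h1 := pen_lip P Y hY hab
      have h2 := pen_mono P Y hY hab
      simp only at h1 h2 ⊢
      rw [abs_of_nonneg (by linarith), abs_of_nonneg (by linarith)]
      linarith
  exact lw.continuous

theorem pen_convex (hY : Integrable Y P) :
    ConvexOn ℝ univ (fun x => ∫ ω, max (x - Y ω) 0 ∂P) := by
  refine ⟨convex_univ, ?_⟩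
  intro x _ y _ a b ha hb hab
  simp only [smul_eq_mul]
  have h1 : (∫ ω, max (a * x + b * y - Y ω) 0 ∂P)
      ≤ ∫ ω, (a * max (x - Y ω) 0 + b * max (y - Y ω) 0) ∂P := by
    refine integral_mono (pen_integrable P Y hY _)
      (((pen_integrable P Y hY x).const_mul a).add ((pen_integrable P Y hY y).const_mul b)) ?_
    intro ω
    dsimp only
    have h2 : a * x + b * y - Y ω = a * (x - Y ω) + b * (y - Y ω) := by
      linear_combination (Y ω) * hab
    have h3 : a * (x - Y ω) ≤ a * max (x - Y ω) 0 :=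
      mul_le_mul_of_nonneg_left (le_max_left _ _) ha
    have h4 : b * (y - Y ω) ≤ b * max (y - Y ω) 0 :=
      mul_le_mul_of_nonneg_left (le_max_left _ _) hb
    have h5 : (0:ℝ) ≤ a * max (x - Y ω) 0 + b * max (y - Y ω) 0 := by positivity
    refine max_le ?_ h5
    rw [h2]; linarith
  rwa [integral_add ((pen_integrable P Y hY x).const_mul a)
      ((pen_integrable P Y hY y).const_mul b),
    integral_const_mul, integral_const_mul] at h1

end Pen


section Price
variable {p p' : ℝ → ℝ}

theorem price_tangent (hp_conc : ConcaveOn ℝ (Ici (0:ℝ)) p)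
    (hp_deriv : ∀ y ∈ Ici (0:ℝ), HasDerivAt p (p' y) y) :
    ∀ y ∈ Ici (0:ℝ), ∀ z ∈ Ici (0:ℝ), p z ≤ p y + p' y * (z - y) := by
  intro y hy z hz
  rcases lt_trichotomy z y with h | h | h
  · have h1 := hp_conc.le_slope_of_hasDerivAt hz hy h (hp_deriv y hy)
    rw [slope_def_field] at h1
    have h2 := (le_div_iff₀ (sub_pos.2 h)).mp h1
    linarith
  · subst h; simp
  · have h1 := hp_conc.slope_le_of_hasDerivAt hy hz h (hp_deriv y hy)
    rw [slope_def_field] at h1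
    have h2 := (div_le_iff₀ (sub_pos.2 h)).mp h1
    linarith

theorem price_deriv_neg (hp_anti : StrictAntiOn p (Ici (0:ℝ)))
    (htan : ∀ y ∈ Ici (0:ℝ), ∀ z ∈ Ici (0:ℝ), p z ≤ p y + p' y * (z - y))
    (hp'0 : p' 0 < 0) : ∀ y ∈ Ici (0:ℝ), p' y < 0 := by
  intro y hy
  rcases eq_or_lt_of_le (mem_Ici.mp hy) with h | h
  · rwa [← h]
  · have h1 := htan y hy 0 self_mem_Ici
    have h2 : p y < p 0 := hp_anti self_mem_Ici hy h
    nlinarith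

theorem price_deriv_anti
    (htan : ∀ y ∈ Ici (0:ℝ), ∀ z ∈ Ici (0:ℝ), p z ≤ p y + p' y * (z - y)) :
    AntitoneOn p' (Ici (0:ℝ)) := by
  intro a ha b hb hab
  rcases eq_or_lt_of_le hab with h | h
  · rw [h]
  · have h1 := htan a ha b hb
    have h2 := htan b hb a ha
    nlinarith

theorem price_deriv_continuousOn (hp_conc : ConcaveOn ℝ (Ici (0:ℝ)) p)
    (hp_deriv : ∀ y ∈ Ici (0:ℝ), HasDerivAt p (p' y) y)
    (htan : ∀ y ∈ Ici (0:ℝ), ∀ z ∈ Ici (0:ℝ), p z ≤ p y + p' y * (z - y)) :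
    ContinuousOn p' (Ici (0:ℝ)) := by
  have hanti := price_deriv_anti htan
  intro S hS
  have hS0 : (0:ℝ) ≤ S := hS
  have hslope : Tendsto (slope p S) (𝓝[≠] S) (𝓝 (p' S)) :=
    (hasDerivAt_iff_tendsto_slope).mp (hp_deriv S hS)
  have hmap : Tendsto (fun u : ℝ => 2 * u - S) (𝓝 S) (𝓝 S) := by
    have hc : Continuous (fun u : ℝ => 2 * u - S) := by continuity
    have := hc.tendsto S
    rw [show (2:ℝ) * S - S = S by ring] at this
    exact this
  have keyId : ∀ u : ℝ, u ≠ S →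
      2 * slope p S (2 * u - S) - slope p S u = (p (2 * u - S) - p u) / (u - S) := by
    intro u hne
    have hd : u - S ≠ 0 := sub_ne_zero.2 hne
    rw [slope_def_field, slope_def_field,
      show 2 * u - S - S = 2 * (u - S) by ring]
    field_simp
    ring
  -- right continuity within Ioi S
  have hright : Tendsto p' (𝓝[>] S) (𝓝 (p' S)) := by
    have hmapr : Tendsto (fun u : ℝ => 2 * u - S) (𝓝[>] S) (𝓝[≠] S) := by
      apply tendsto_nhdsWithin_of_tendsto_nhds_of_eventually_within
      · exact hmap.mono_left nhdsWithin_le_nhds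
      · filter_upwards [self_mem_nhdsWithin] with u (hu : S < u)
        show 2 * u - S ≠ S
        intro hc
        have : u = S := by linarith [hc]
        exact absurd this (ne_of_gt hu)
    have hL : Tendsto (fun u => 2 * slope p S (2 * u - S) - slope p S u) (𝓝[>] S)
        (𝓝 (p' S)) := by
      have t1 : Tendsto (fun u => slope p S (2 * u - S)) (𝓝[>] S) (𝓝 (p' S)) :=
        hslope.comp hmapr
      have t2 : Tendsto (fun u => slope p S u) (𝓝[>] S) (𝓝 (p' S)) :=
        hslope.mono_left (nhdsWithin_mono S (fun u (hu : S < u) => ne_of_gt hu))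
      have := (t1.const_mul 2).sub t2
      rw [show 2 * p' S - p' S = p' S by ring] at this
      exact this
    refine tendsto_of_tendsto_of_tendsto_of_le_of_le' hL tendsto_const_nhds ?_ ?_
    · filter_upwards [self_mem_nhdsWithin] with u (hu : S < u)
      have hu0 : (0:ℝ) ≤ u := le_trans hS0 hu.le
      have h2u : (2 * u - S) ∈ Ici (0:ℝ) := by simp only [mem_Ici]; linarith
      have t := htan u hu0 (2 * u - S) h2u
      have hd : 0 < u - S := by linarith
      rw [keyId u (ne_of_gt hu)]
      rw [div_le_iff₀ hd]
      have : 2 * u - S - u = u - S := by ring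
      rw [this] at t
      linarith
    · filter_upwards [self_mem_nhdsWithin] with u (hu : S < u)
      exact hanti hS (le_trans hS0 hu.le) hu.le
  -- left continuity within Ico 0 S
  have hleft : Tendsto p' (𝓝[Ico 0 S] S) (𝓝 (p' S)) := by
    rcases eq_or_lt_of_le hS0 with hSeq | hSpos
    · rw [← hSeq]
      simp [Ico_self]
    · have hmapl : Tendsto (fun u : ℝ => 2 * u - S) (𝓝[Ico 0 S] S) (𝓝[≠] S) := by
        apply tendsto_nhdsWithin_of_tendsto_nhds_of_eventually_within
        · exact hmap.mono_left nhdsWithin_le_nhds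
        · filter_upwards [self_mem_nhdsWithin] with u hu
          show 2 * u - S ≠ S
          intro hc
          have : u = S := by linarith [hc]
          exact absurd this (ne_of_lt hu.2)
      have hU : Tendsto (fun u => 2 * slope p S (2 * u - S) - slope p S u) (𝓝[Ico 0 S] S)
          (𝓝 (p' S)) := by
        have t1 : Tendsto (fun u => slope p S (2 * u - S)) (𝓝[Ico 0 S] S) (𝓝 (p' S)) :=
          hslope.comp hmapl
        have t2 : Tendsto (fun u => slope p S u) (𝓝[Ico 0 S] S) (𝓝 (p' S)) :=
          hslope.mono_left (nhdsWithin_mono S (fun u hu => ne_of_lt hu.2))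
        have := (t1.const_mul 2).sub t2
        rw [show 2 * p' S - p' S = p' S by ring] at this
        exact this
      have hhalf : ∀ᶠ u in 𝓝[Ico 0 S] S, S / 2 < u :=
        eventually_nhdsWithin_of_eventually_nhds (eventually_gt_nhds (by linarith))
      refine tendsto_of_tendsto_of_tendsto_of_le_of_le' tendsto_const_nhds hU ?_ ?_
      · filter_upwards [self_mem_nhdsWithin] with u hu
        exact hanti hu.1 hS hu.2.le
      · filter_upwards [self_mem_nhdsWithin, hhalf] with u hu hu2
        have hu0 : (0:ℝ) ≤ u := hu.1
        have h2u : (2 * u - S) ∈ Ici (0:ℝ) := by simp only [mem_Ici]; linarith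
        have t := htan u hu0 (2 * u - S) h2u
        have hd : u - S < 0 := by linarith [hu.2]
        rw [keyId u (ne_of_lt hu.2)]
        rw [le_div_iff_of_neg hd]
        have : 2 * u - S - u = u - S := by ring
        rw [this] at t
        linarith
  -- combine
  have c1 : ContinuousWithinAt p' (Ici S) S := by
    rw [show Ici S = insert S (Ioi S) from Ioi_insert.symm]
    exact (continuousWithinAt_insert_self).mpr hright
  have c2 : ContinuousWithinAt p' (Icc 0 S) S := by
    rw [show Icc (0:ℝ) S = insert S (Ico 0 S) from (Ico_insert_right hS0).symm]
    exact (continuousWithinAt_insert_self).mpr hleft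
  have := c2.union c1
  refine this.mono ?_
  intro t ht
  rcases le_total t S with h | h
  · exact Or.inl ⟨ht, h⟩
  · exact Or.inr h

end Price


theorem quad_strictConcaveOn {c : ℝ} (hc : c < 0) :
    StrictConcaveOn ℝ (univ : Set ℝ) (fun x => c * x ^ 2) := by
  refine ⟨convex_univ, ?_⟩
  intro x _ y _ hxy a b ha hb hab
  simp only [smul_eq_mul]
  have h2 : x - y ≠ 0 := sub_ne_zero.mpr hxy
  have h1 : 0 < (x - y) ^ 2 := lt_of_le_of_ne (sq_nonneg _) (Ne.symm (pow_ne_zero 2 h2))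
  have key : 0 < (-c) * (a * b * (x - y) ^ 2) :=
    mul_pos (neg_pos.2 hc) (mul_pos (mul_pos ha hb) h1)
  have hb' : b = 1 - a := by linarith
  subst hb'
  nlinarith [key]

theorem quad_concaveOn {c : ℝ} (hc : c ≤ 0) :
    ConcaveOn ℝ (univ : Set ℝ) (fun x => c * x ^ 2) := by
  refine ⟨convex_univ, ?_⟩
  intro x _ y _ a b ha hb hab
  simp only [smul_eq_mul]
  have key : 0 ≤ (-c) * (a * b * (x - y) ^ 2) :=
    mul_nonneg (neg_nonneg.2 hc) (mul_nonneg (mul_nonneg ha hb) (sq_nonneg _))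
  have hb' : b = 1 - a := by linarith
  subst hb'
  nlinarith [key]

theorem lin_concaveOn (c : ℝ) : ConcaveOn ℝ (univ : Set ℝ) (fun x : ℝ => c * x) := by
  refine ⟨convex_univ, ?_⟩
  intro x _ y _ a b _ _ _
  simp only [smul_eq_mul]
  apply le_of_eq
  ring

set_option maxHeartbeats 1000000 in
theorem cournot_nash_exists_and_aggregate_le_ymax
    {Ω : Type*} [MeasurableSpace Ω] (P : Measure Ω) [IsProbabilityMeasure P]
    (p p' : ℝ → ℝ)
    (hp_anti : StrictAntiOn p (Set.Ici (0 : ℝ)))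
    (hp_conc : ConcaveOn ℝ (Set.Ici (0 : ℝ)) p)
    (hp_deriv : ∀ y ∈ Set.Ici (0 : ℝ), HasDerivAt p (p' y) y)
    (hp0 : 0 < p 0) (hp'0 : p' 0 < 0)
    (hp_bot : Filter.Tendsto p Filter.atTop Filter.atBot)
    (ymax : ℝ) (hymax_pos : 0 < ymax) (hymax : p ymax = 0)
    (N : ℕ) (hN : 1 ≤ N)
    (X : Fin N → Ω → ℝ) (hX : ∀ i, Integrable (X i) P) :
    (∃ x : Fin N → ℝ, IsCournotNash P p X x) ∧
      (∀ x : Fin N → ℝ, IsCournotNash P p X x → ∑ i, x i ≤ ymax) := by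
  obtain ⟨h, hh⟩ : ∃ h' : Fin N → ℝ → ℝ, h' = fun i x => ∫ ω, max (x - X i ω) 0 ∂P := ⟨_, rfl⟩
  have hmono : ∀ i, Monotone (h i) := by rw [hh]; exact fun i => pen_mono P (X i) (hX i)
  have hcont : ∀ i, Continuous (h i) := by rw [hh]; exact fun i => pen_continuous P (X i) (hX i)
  have hconv : ∀ i, ConvexOn ℝ univ (h i) := by rw [hh]; exact fun i => pen_convex P (X i) (hX i)
  have htan := price_tangent hp_conc hp_deriv
  have hp'neg := price_deriv_neg hp_anti htan hp'0
  have hp'anti := price_deriv_anti htan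
  have hp'contIci := price_deriv_continuousOn hp_conc hp_deriv htan
  have hpcontIci : ContinuousOn p (Ici (0:ℝ)) :=
    fun y hy => ((hp_deriv y hy).continuousAt).continuousWithinAt
  -- Part 2: every Nash equilibrium has aggregate at most ymax.
  have part2 : ∀ x : Fin N → ℝ, IsCournotNash P p X x → ∑ i, x i ≤ ymax := by
    intro x hx
    by_contra hcon
    push_neg at hcon
    have hxnn := hx.1
    have hSnn : (0:ℝ) ≤ ∑ i, x i := Finset.sum_nonneg (fun i _ => hxnn i)
    have hpS : p (∑ i, x i) < 0 := by
      rw [← hymax]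
      exact hp_anti (mem_Ici.mpr hymax_pos.le) (mem_Ici.mpr hSnn) hcon
    have hex : ∃ i, 0 < x i := by
      by_contra hno
      push_neg at hno
      have : (∑ i, x i) ≤ 0 := Finset.sum_nonpos (fun i _ => hno i)
      linarith
    obtain ⟨i, hi⟩ := hex
    have hdev := hx.2 i 0 le_rfl
    simp only [cournotPayoff, Function.update_self, mul_zero, zero_sub] at hdev
    have hmi : h i 0 ≤ h i (x i) := hmono i (hxnn i)
    have hneg : p (∑ j, x j) * x i < 0 := mul_neg_of_neg_of_pos hpS hi
    simp only [hh, zero_sub] at hmi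
    linarith
  refine ⟨?_, part2⟩
  -- Setup for existence.
  obtain ⟨M, hM⟩ : ∃ M' : ℝ, M' = 1 + 2 * p 0 / (-p' 0) := ⟨_, rfl⟩
  have hMpos1 : (0:ℝ) < 2 * p 0 / (-p' 0) := by
    apply div_pos (by linarith) (by linarith)
  have hM1 : (1:ℝ) ≤ M := by rw [hM]; linarith
  have hMpos : (0:ℝ) < M := by linarith
  obtain ⟨u, hu⟩ : ∃ u' : ℝ → Fin N → ℝ → ℝ,
      u' = fun S i x => p S * x + p' S * x ^ 2 / 2 - h i x := ⟨_, rfl⟩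
  have ucont : ∀ S i, Continuous (u S i) := by
    intro S i
    rw [hu]
    exact ((continuous_const.mul continuous_id).add
        ((continuous_const.mul (continuous_pow 2)).div_const 2)).sub (hcont i)
  have ustrict : ∀ S, 0 ≤ S → ∀ i, StrictConcaveOn ℝ (Icc (0:ℝ) M) (u S i) := by
    intro S hS i
    have hq := quad_strictConcaveOn (show p' S / 2 < 0 by
      have := hp'neg S (mem_Ici.mpr hS); linarith)
    have hl := lin_concaveOn (p S)
    have hn := (hconv i).neg
    have hcomb := (hq.add_concaveOn hl).add_concaveOn hn
    have heq : u S i = ((fun x => p' S / 2 * x ^ 2) + fun x => p S * x) + -(h i) := by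
      funext x
      simp only [hu, Pi.add_apply, Pi.neg_apply]
      ring
    rw [heq]
    exact hcomb.subset (subset_univ _) (convex_Icc 0 M)
  -- maximizers
  have key : ∀ (i : Fin N) (S : ℝ), ∃ x, x ∈ Icc (0:ℝ) M ∧ IsMaxOn (u S i) (Icc 0 M) x := by
    intro i S
    obtain ⟨x, hx, hmax⟩ := isCompact_Icc.exists_isMaxOn ⟨0, le_rfl, hMpos.le⟩
      ((ucont S i).continuousOn)
    exact ⟨x, hx, hmax⟩
  choose ψ ψmem ψmax using key
  have ψuniq : ∀ S, 0 ≤ S → ∀ i, ∀ x ∈ Icc (0:ℝ) M, IsMaxOn (u S i) (Icc 0 M) x →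
      x = ψ i S := by
    intro S hS i x hx hmax
    exact (ustrict S hS i).eq_of_isMaxOn hmax (ψmax i S) hx (ψmem i S)
  -- beyond M the objective is worse than at 0
  have ubound : ∀ S, S ∈ Icc (0:ℝ) ymax → ∀ i, ∀ x, M ≤ x → u S i x < u S i 0 := by
    intro S hS i x hxM
    have hx1 : (1:ℝ) ≤ x := le_trans hM1 hxM
    have hx0 : (0:ℝ) < x := by linarith
    have hpS_le : p S ≤ p 0 := hp_anti.antitoneOn self_mem_Ici (mem_Ici.mpr hS.1) hS.1
    have hp'S_le : p' S ≤ p' 0 := hp'anti self_mem_Ici (mem_Ici.mpr hS.1) hS.1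
    have hhx : h i 0 ≤ h i x := hmono i hx0.le
    have hA : p S * x ≤ p 0 * x := mul_le_mul_of_nonneg_right hpS_le hx0.le
    have hB : p' S * x ^ 2 ≤ p' 0 * x ^ 2 :=
      mul_le_mul_of_nonneg_right hp'S_le (sq_nonneg x)
    have hC : p' 0 * x ^ 2 ≤ p' 0 * (x * M) := by
      apply mul_le_mul_of_nonpos_left _ hp'0.le
      nlinarith
    have hpM : p' 0 * M = p' 0 - 2 * p 0 := by
      have h2 : 2 * p 0 / -p' 0 * -p' 0 = 2 * p 0 :=
        div_mul_cancel₀ _ (by linarith : -p' 0 ≠ 0)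
      rw [hM]
      nlinarith [h2]
    simp only [hu]
    nlinarith [mul_le_mul_of_nonneg_right (le_refl (p' 0)) hx0.le]
  -- the maximizer is a global maximizer over [0, ∞)
  have uglobal : ∀ S, S ∈ Icc (0:ℝ) ymax → ∀ i, ∀ x, 0 ≤ x → u S i x ≤ u S i (ψ i S) := by
    intro S hS i x hx
    rcases le_total x M with hxM | hxM
    · exact ψmax i S ⟨hx, hxM⟩
    · exact le_trans (ubound S hS i x hxM).le (ψmax i S ⟨le_rfl, hMpos.le⟩)
  -- at ymax the maximizer is 0
  have ψymax : ∀ i, ψ i ymax = 0 := by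
    intro i
    have hmax0 : IsMaxOn (u ymax i) (Icc 0 M) 0 := by
      rw [isMaxOn_iff]
      intro x hx
      have hp'y := hp'neg ymax (mem_Ici.mpr hymax_pos.le)
      have hhx : h i 0 ≤ h i x := hmono i hx.1
      have : p' ymax * x ^ 2 ≤ 0 := mul_nonpos_of_nonpos_of_nonneg hp'y.le (sq_nonneg x)
      simp only [hu, hymax]
      nlinarith
    exact (ψuniq ymax hymax_pos.le i 0 ⟨le_rfl, hMpos.le⟩ hmax0).symm
  -- strong concavity estimate
  have strong : ∀ S, S ∈ Icc (0:ℝ) ymax → ∀ i, ∀ x ∈ Icc (0:ℝ) M,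
      u S i x ≤ u S i (ψ i S) + p' 0 / 4 * (x - ψ i S) ^ 2 := by
    intro S hS i x hx
    have hp'S_le : p' S ≤ p' 0 := hp'anti self_mem_Ici (mem_Ici.mpr hS.1) hS.1
    set w : ℝ → ℝ := fun t => p S * t + (p' S - p' 0) * t ^ 2 / 2 - h i t with hw
    have hwconc : ConcaveOn ℝ univ w := by
      have hq := quad_concaveOn (show (p' S - p' 0) / 2 ≤ 0 by linarith)
      have hl := lin_concaveOn (p S)
      have hn := (hconv i).neg
      have hcomb := (hl.add hq).add hn
      have heq : w = ((fun t => p S * t) + fun t => (p' S - p' 0) / 2 * t ^ 2) + -(h i) := by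
        funext t
        simp only [hw, Pi.add_apply, Pi.neg_apply]
        ring
      rw [heq]
      exact hcomb
    set xs := ψ i S with hxs
    have hxsmem := ψmem i S
    have hmid := hwconc.2 (mem_univ x) (mem_univ xs)
      (by norm_num : (0:ℝ) ≤ (1:ℝ)/2) (by norm_num : (0:ℝ) ≤ (1:ℝ)/2) (by norm_num)
    simp only [smul_eq_mul] at hmid
    have hmmem : (0:ℝ) ≤ 1/2 * x + 1/2 * xs := by
      have := hx.1; have := hxsmem.1; linarith
    have humax := uglobal S hS i (1/2 * x + 1/2 * xs) hmmem
    have e1 : ∀ t, u S i t = w t + p' 0 * t ^ 2 / 2 := by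
      intro t
      simp only [hu, hw]
      ring
    rw [e1, e1] at humax
    rw [e1, e1]
    nlinarith [hmid, humax]
  -- quantitative continuity estimate
  have quant : ∀ S1, S1 ∈ Icc (0:ℝ) ymax → ∀ S2, S2 ∈ Icc (0:ℝ) ymax → ∀ i,
      (ψ i S1 - ψ i S2) ^ 2 ≤
        (4 * (|p S1 - p S2| * M + |p' S1 - p' S2| * M ^ 2)) / (-p' 0) := by
    intro S1 hS1 S2 hS2 i
    have hstrong := strong S1 hS1 i (ψ i S2) (ψmem i S2)
    have hopt : u S2 i (ψ i S1) ≤ u S2 i (ψ i S2) := ψmax i S2 (ψmem i S1)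
    have hb1 : |ψ i S1 - ψ i S2| ≤ M := by
      have h1 := ψmem i S1; have h2 := ψmem i S2
      rw [abs_le]
      constructor <;> [linarith [h1.1, h2.2]; linarith [h1.2, h2.1]]
    have hb2 : |(ψ i S1) ^ 2 - (ψ i S2) ^ 2| ≤ M ^ 2 := by
      have h1 := ψmem i S1; have h2 := ψmem i S2
      have q1 : (ψ i S1) ^ 2 ≤ M ^ 2 := pow_le_pow_left₀ h1.1 h1.2 2
      have q2 : (ψ i S2) ^ 2 ≤ M ^ 2 := pow_le_pow_left₀ h2.1 h2.2 2
      have q3 : 0 ≤ (ψ i S1) ^ 2 := sq_nonneg _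
      have q4 : 0 ≤ (ψ i S2) ^ 2 := sq_nonneg _
      rw [abs_le]
      constructor <;> linarith
    have hdiff : u S1 i (ψ i S1) - u S1 i (ψ i S2) ≤
        |p S1 - p S2| * M + |p' S1 - p' S2| * M ^ 2 := by
      have e2 : u S1 i (ψ i S1) - u S1 i (ψ i S2) =
          (u S2 i (ψ i S1) - u S2 i (ψ i S2)) + (p S1 - p S2) * (ψ i S1 - ψ i S2)
          + (p' S1 - p' S2) * ((ψ i S1) ^ 2 - (ψ i S2) ^ 2) / 2 := by
        simp only [hu]
        ring
      have hq1 : (p S1 - p S2) * (ψ i S1 - ψ i S2) ≤ |p S1 - p S2| * M := by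
        calc (p S1 - p S2) * (ψ i S1 - ψ i S2) ≤ |(p S1 - p S2) * (ψ i S1 - ψ i S2)| :=
              le_abs_self _
          _ = |p S1 - p S2| * |ψ i S1 - ψ i S2| := abs_mul _ _
          _ ≤ |p S1 - p S2| * M := mul_le_mul_of_nonneg_left hb1 (abs_nonneg _)
      have hq2 : (p' S1 - p' S2) * ((ψ i S1) ^ 2 - (ψ i S2) ^ 2) ≤
          |p' S1 - p' S2| * M ^ 2 := by
        calc (p' S1 - p' S2) * ((ψ i S1) ^ 2 - (ψ i S2) ^ 2)
            ≤ |(p' S1 - p' S2) * ((ψ i S1) ^ 2 - (ψ i S2) ^ 2)| := le_abs_self _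
          _ = |p' S1 - p' S2| * |(ψ i S1) ^ 2 - (ψ i S2) ^ 2| := abs_mul _ _
          _ ≤ |p' S1 - p' S2| * M ^ 2 := mul_le_mul_of_nonneg_left hb2 (abs_nonneg _)
      have habs2 : (0:ℝ) ≤ |p' S1 - p' S2| * M ^ 2 :=
        mul_nonneg (abs_nonneg _) (sq_nonneg _)
      nlinarith [hopt, e2, hq1, hq2, habs2]
    rw [le_div_iff₀ (by linarith : (0:ℝ) < -p' 0)]
    rw [show (ψ i S2 - ψ i S1) ^ 2 = (ψ i S1 - ψ i S2) ^ 2 from by ring] at hstrong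
    nlinarith [hstrong, hdiff]
  -- continuity of the maximizers
  have ψcont : ∀ i, ContinuousOn (fun S => ψ i S) (Icc (0:ℝ) ymax) := by
    intro i S0 hS0
    have hpt : Filter.Tendsto p (𝓝[Icc (0:ℝ) ymax] S0) (𝓝 (p S0)) :=
      (hpcontIci.mono (Icc_subset_Ici_self)) S0 hS0
    have hp't : Filter.Tendsto p' (𝓝[Icc (0:ℝ) ymax] S0) (𝓝 (p' S0)) :=
      (hp'contIci.mono (Icc_subset_Ici_self)) S0 hS0
    have habs1 : Filter.Tendsto (fun S => |p S - p S0|) (𝓝[Icc (0:ℝ) ymax] S0)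
        (𝓝 |p S0 - p S0|) := (hpt.sub tendsto_const_nhds).abs
    rw [sub_self, abs_zero] at habs1
    have habs2 : Filter.Tendsto (fun S => |p' S - p' S0|) (𝓝[Icc (0:ℝ) ymax] S0)
        (𝓝 |p' S0 - p' S0|) := (hp't.sub tendsto_const_nhds).abs
    rw [sub_self, abs_zero] at habs2
    have hEt : Filter.Tendsto
        (fun S => (4 * (|p S - p S0| * M + |p' S - p' S0| * M ^ 2)) / (-p' 0))
        (𝓝[Icc (0:ℝ) ymax] S0) (𝓝 ((4 * ((0:ℝ) * M + 0 * M ^ 2)) / (-p' 0))) :=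
      (((habs1.mul_const M).add (habs2.mul_const (M ^ 2))).const_mul 4).div_const (-p' 0)
    rw [show (4 * ((0:ℝ) * M + 0 * M ^ 2)) / (-p' 0) = 0 by simp] at hEt
    have hsq : Filter.Tendsto
        (fun S => Real.sqrt ((4 * (|p S - p S0| * M + |p' S - p' S0| * M ^ 2)) / (-p' 0)))
        (𝓝[Icc (0:ℝ) ymax] S0) (𝓝 0) := by
      have hcomp := (Real.continuous_sqrt.tendsto 0).comp hEt
      rw [Real.sqrt_zero] at hcomp
      exact hcomp
    rw [ContinuousWithinAt, tendsto_iff_dist_tendsto_zero]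
    refine squeeze_zero' (Filter.Eventually.of_forall (fun _ => dist_nonneg)) ?_ hsq
    filter_upwards [self_mem_nhdsWithin] with S hS
    rw [Real.dist_eq, ← Real.sqrt_sq_eq_abs]
    exact Real.sqrt_le_sqrt (quant S hS S0 hS0 i)
  -- IVT for the aggregate best response
  have Gcont : ContinuousOn (fun S => (∑ i, ψ i S) - S) (Icc (0:ℝ) ymax) := by
    apply ContinuousOn.sub _ continuousOn_id
    exact continuousOn_finset_sum _ (fun i _ => ψcont i)
  have hGy : (∑ i, ψ i ymax) - ymax = -ymax := by
    simp [ψymax]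
  have hG0 : 0 ≤ (∑ i, ψ i 0) - 0 := by
    simp only [sub_zero]
    exact Finset.sum_nonneg (fun i _ => (ψmem i 0).1)
  have hmem0 : (0:ℝ) ∈ Icc ((∑ i, ψ i ymax) - ymax) ((∑ i, ψ i 0) - 0) := by
    rw [hGy]
    exact ⟨by linarith, hG0⟩
  obtain ⟨S', hS'mem, hGS'⟩ := intermediate_value_Icc' hymax_pos.le Gcont hmem0
  have hsum : ∑ i, ψ i S' = S' := by
    have : (∑ i, ψ i S') - S' = 0 := hGS'
    linarith
  -- the equilibrium profile
  refine ⟨fun i => ψ i S', (fun i => (ψmem i S').1), ?_⟩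
  intro i xd hxd
  have hrest : ψ i S' + ∑ j ∈ Finset.univ \ {i}, ψ j S' = S' := by
    have h1 := Finset.add_sum_erase Finset.univ (fun j => ψ j S') (Finset.mem_univ i)
    rw [Finset.erase_eq] at h1
    rw [h1, hsum]
  have hs0nn : (0:ℝ) ≤ ∑ j ∈ Finset.univ \ {i}, ψ j S' :=
    Finset.sum_nonneg (fun j _ => (ψmem j S').1)
  have hS'0 : (0:ℝ) ≤ S' := hS'mem.1
  have t := htan S' (mem_Ici.mpr hS'0) (xd + ∑ j ∈ Finset.univ \ {i}, ψ j S')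
    (mem_Ici.mpr (by linarith))
  rw [show xd + (∑ j ∈ Finset.univ \ {i}, ψ j S') - S' = xd - ψ i S' from by linarith] at t
  have gm := uglobal S' hS'mem i xd hxd
  simp only [hu, hh] at gm
  have hp'S' := hp'neg S' (mem_Ici.mpr hS'0)
  have sqterm : p' S' * (xd - ψ i S') ^ 2 ≤ 0 :=
    mul_nonpos_of_nonpos_of_nonneg hp'S'.le (sq_nonneg _)
  simp only [cournotPayoff, hh]
  rw [Finset.sum_update_of_mem (Finset.mem_univ i)]
  simp only [Function.update_self]
  rw [show (∑ j, ψ j S') = S' from hsum]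
  nlinarith [mul_le_mul_of_nonneg_right t hxd, gm, sqterm]
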